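/- Suppose π₁ : ℝ → (0,∞) is a C¹ probability density such that there exist t, c ∈ (0,∞) and q ∈ [0,1) with |(d/dx) log π₁(x)| ≥ c|x|^q for all |x| ≥ t. Then there exists C ∈ (0,∞) such that π₁(x) ≤ C·exp(−c|x|^{1+q}/(1+q)) for all |x| ≥ t. -/

import Mathlib

open MeasureTheory Real

open Set in

lemma light_tail_aux
    (p : ℝ → ℝ) (hpos : ∀ x, 0 < p x) (hC1 : ContDiff ℝ 1 p)
    (hint : Integrable p)
    (q : ℝ) (hq0 : 0 ≤ q)
    (t c : ℝ) (ht : 0 < t) (hc : 0 < c)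
    (hgrad : ∀ x : ℝ, t ≤ x →
      c * x ^ q ≤ |deriv (fun y => Real.log (p y)) x|) :
    ∃ C : ℝ, 0 < C ∧ ∀ x : ℝ, t ≤ x →
      p x ≤ C * Real.exp (-c * x ^ (1 + q) / (1 + q)) := by
  set f : ℝ → ℝ := fun y => Real.log (p y) with hf
  have hpd : Differentiable ℝ p := hC1.differentiable one_ne_zero
  have hfd : ∀ x : ℝ, HasDerivAt f (deriv p x / p x) x := fun x =>
    (hpd x).hasDerivAt.log (hpos x).ne'
  have hderiv : ∀ x : ℝ, deriv f x = deriv p x / p x := fun x => (hfd x).deriv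
  have hgc : Continuous (deriv f) := by
    have : Continuous fun x => deriv p x / p x :=
      (hC1.continuous_deriv le_rfl).div hC1.continuous fun x => (hpos x).ne'
    simpa [funext hderiv] using this
  have hfdiff : Differentiable ℝ f := fun x => (hfd x).differentiableAt
  have hne : ∀ x : ℝ, t ≤ x → deriv f x ≠ 0 := by
    intro x hx h
    have h1 : (0:ℝ) < c * x ^ q :=
      mul_pos hc (Real.rpow_pos_of_pos (ht.trans_le hx) q)
    have := hgrad x hx
    rw [h, abs_zero] at this
    linarith
  -- deriv f is negative on [t, ∞)
  have hneg : ∀ x : ℝ, t ≤ x → deriv f x < 0 := by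
    intro x hx
    rcases lt_or_gt_of_ne (hne x hx) with h | h
    · exact h
    exfalso
    -- then deriv f > 0 on [x, ∞)
    have hgy : ∀ y, x ≤ y → 0 < deriv f y := by
      intro y hy
      rcases lt_trichotomy (deriv f y) 0 with h' | h' | h'
      · exfalso
        have hsub : Icc (deriv f y) (deriv f x) ⊆ deriv f '' Icc x y :=
          intermediate_value_Icc' hy hgc.continuousOn
        have h0 : (0:ℝ) ∈ Icc (deriv f y) (deriv f x) := ⟨h'.le, h.le⟩
        obtain ⟨z, hz, hz0⟩ := hsub h0
        exact hne z (hx.trans hz.1) hz0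
      · exact absurd h' (hne y (hx.trans hy))
      · exact h'
    have hmono : StrictMonoOn f (Ici x) := by
      refine strictMonoOn_of_deriv_pos (convex_Ici x) hfdiff.continuous.continuousOn ?_
      intro y hy
      exact hgy y (le_of_lt (by simpa using hy))
    have hpmono : ∀ y, x ≤ y → p x ≤ p y := by
      intro y hy
      rcases eq_or_lt_of_le hy with rfl | hy'
      · exact le_rfl
      · have := (hmono (self_mem_Ici) hy hy').le
        have h2 : Real.log (p x) ≤ Real.log (p y) := this
        exact (Real.log_le_log_iff (hpos x) (hpos y)).mp h2
    -- contradiction with integrability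
    have hind : Integrable (Set.indicator (Ici x) fun _ => p x) := by
      refine hint.mono ?_ ?_
      · exact (measurable_const.indicator measurableSet_Ici).aestronglyMeasurable
      · refine Filter.Eventually.of_forall fun y => ?_
        by_cases hy : y ∈ Ici x
        · rw [Set.indicator_of_mem hy]
          rw [Real.norm_eq_abs, Real.norm_eq_abs,
            abs_of_pos (hpos x), abs_of_pos (hpos y)]
          exact hpmono y hy
        · rw [Set.indicator_of_notMem hy, norm_zero]
          exact norm_nonneg _
    rw [integrable_indicator_iff measurableSet_Ici] at hind
    rcases (integrableOn_const_iff (C := p x) (by finiteness)).mp hind with h' | h'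
    · exact (hpos x).ne' (enorm_eq_zero.mp h')
    · rw [Real.volume_Ici] at h'; exact lt_irrefl _ h'
  -- hence deriv f x ≤ -c x^q
  have hle : ∀ x : ℝ, t ≤ x → deriv f x ≤ -(c * x ^ q) := by
    intro x hx
    have := hgrad x hx
    rw [abs_of_neg (hneg x hx)] at this
    linarith
  -- define h and show antitone
  set h : ℝ → ℝ := fun x => f x + c / (1 + q) * x ^ (1 + q) with hh
  have h1q : (0:ℝ) < 1 + q := by linarith
  have hhd : ∀ x : ℝ, 0 < x → HasDerivAt h (deriv f x + c * x ^ q) x := by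
    intro x hx
    have h1 : HasDerivAt (fun y : ℝ => y ^ (1 + q)) ((1 + q) * x ^ (1 + q - 1)) x :=
      Real.hasDerivAt_rpow_const (Or.inl hx.ne')
    have h2 := (h1.const_mul (c / (1 + q))).const_add (f x)
    have h3 : (hfd x).deriv ▸ (hfd x) = (hfd x) := rfl
    have := ((hderiv x) ▸ (hfd x)).add (h1.const_mul (c / (1 + q)))
    convert this using 1
    case e'_4 => rfl
    case e'_5 => rfl
    case e'_8 => rfl
    have : (1:ℝ) + q - 1 = q := by ring
    rw [this]
    field_simp
  have hanti : AntitoneOn h (Ici t) := by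
    refine antitoneOn_of_deriv_nonpos (convex_Ici t) ?_ ?_ ?_
    · intro x hx
      exact ((hhd x (ht.trans_le hx)).continuousAt).continuousWithinAt
    · intro x hx
      rw [interior_Ici] at hx
      exact ((hhd x (ht.trans hx)).differentiableAt).differentiableWithinAt
    · intro x hx
      rw [interior_Ici] at hx
      rw [(hhd x (ht.trans hx)).deriv]
      have := hle x (le_of_lt hx)
      linarith
  refine ⟨p t * Real.exp (c / (1 + q) * t ^ (1 + q)), mul_pos (hpos t) (Real.exp_pos _), ?_⟩
  intro x hx
  have hb : h x ≤ h t := hanti self_mem_Ici hx hx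
  have hfx : f x ≤ f t + c / (1 + q) * t ^ (1 + q) - c / (1 + q) * x ^ (1 + q) := by
    simp only [hh] at hb; linarith
  have : p x = Real.exp (f x) := by rw [hf, Real.exp_log (hpos x)]
  rw [this]
  calc Real.exp (f x)
      ≤ Real.exp (f t + c / (1 + q) * t ^ (1 + q) - c / (1 + q) * x ^ (1 + q)) :=
        Real.exp_le_exp.mpr hfx
    _ = p t * Real.exp (c / (1 + q) * t ^ (1 + q)) *
        Real.exp (-c * x ^ (1 + q) / (1 + q)) := by
        rw [Real.exp_sub, Real.exp_add, Real.exp_log (hpos t)]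
        ring_nf
        rw [← Real.exp_neg]

open Set in
/-- If `π₁` is a `C¹` strictly positive probability density on `ℝ` whose
log-derivative satisfies `|(log π₁)'(x)| ≥ c|x|^q` for `|x| ≥ t`, with
`q ∈ [0,1)`, then `π₁(x) ≤ C·exp(−c|x|^{1+q}/(1+q))` for `|x| ≥ t`. -/
theorem light_tail_bound
    (π₁ : ℝ → ℝ) (hpos : ∀ x, 0 < π₁ x) (hC1 : ContDiff ℝ 1 π₁)
    (hint : Integrable π₁) (hprob : ∫ x, π₁ x = 1)
    (q : ℝ) (hq0 : 0 ≤ q) (hq1 : q < 1)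
    (t c : ℝ) (ht : 0 < t) (hc : 0 < c)
    (hgrad : ∀ x : ℝ, t ≤ |x| →
      c * |x| ^ q ≤ |deriv (fun y => Real.log (π₁ y)) x|) :
    ∃ C : ℝ, 0 < C ∧ ∀ x : ℝ, t ≤ |x| →
      π₁ x ≤ C * Real.exp (-c * |x| ^ (1 + q) / (1 + q)) := by
  -- right side
  obtain ⟨C₁, hC₁, hb₁⟩ := light_tail_aux π₁ hpos hC1 hint q hq0 t c ht hc
    (fun x hx => by
      have h1 : t ≤ |x| := hx.trans (le_abs_self x)
      have h2 : |x| = x := abs_of_pos (ht.trans_le hx)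
      simpa [h2] using hgrad x h1)
  -- left side: reflect
  set p₂ : ℝ → ℝ := fun y => π₁ (-y) with hp₂
  have hpos₂ : ∀ x, 0 < p₂ x := fun x => hpos (-x)
  have hC1₂ : ContDiff ℝ 1 p₂ := hC1.comp contDiff_neg
  have hint₂ : Integrable p₂ := hint.comp_neg
  have hd₂ : ∀ x : ℝ, deriv (fun y => Real.log (p₂ y)) x
      = -deriv (fun y => Real.log (π₁ y)) (-x) := by
    intro x
    have h1 : HasDerivAt (fun y => Real.log (π₁ y))
        (deriv π₁ (-x) / π₁ (-x)) (-x) :=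
      ((hC1.differentiable one_ne_zero) (-x)).hasDerivAt.log (hpos (-x)).ne'
    have h2 : HasDerivAt (fun y : ℝ => -y) (-1) x := (hasDerivAt_neg x)
    have h3 := h1.comp x h2
    have h4 : HasDerivAt (fun y => Real.log (p₂ y))
        (deriv π₁ (-x) / π₁ (-x) * (-1)) x := h3
    rw [h4.deriv, h1.deriv]
    ring
  obtain ⟨C₂, hC₂, hb₂⟩ := light_tail_aux p₂ hpos₂ hC1₂ hint₂ q hq0 t c ht hc
    (fun x hx => by
      have h1 : t ≤ |(-x)| := by
        rw [abs_neg, abs_of_pos (ht.trans_le hx)]; exact hx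
      have h2 := hgrad (-x) h1
      rw [hd₂ x, abs_neg]
      rw [abs_neg, abs_of_pos (ht.trans_le hx)] at h2
      exact h2)
  refine ⟨max C₁ C₂, lt_max_of_lt_left hC₁, ?_⟩
  intro x hx
  rcases le_or_gt 0 x with hx0 | hx0
  · have h2 : |x| = x := abs_of_nonneg hx0
    rw [h2] at hx ⊢
    exact (hb₁ x hx).trans
      (mul_le_mul_of_nonneg_right (le_max_left _ _) (Real.exp_pos _).le)
  · have h2 : |x| = -x := abs_of_neg hx0
    rw [h2] at hx ⊢
    have := hb₂ (-x) hx
    rw [hp₂] at this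
    simp only [neg_neg] at this
    exact this.trans
      (mul_le_mul_of_nonneg_right (le_max_right _ _) (Real.exp_pos _).le)
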